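/- For any m, m̃ ∈ ℝ, σ², σ̃² > 0, a ∈ ℝ, b ∈ ℝ, and ε > 0, the one-dimensional Gaussian distributions satisfy D_KL(N(am + b, a²σ² + ε) ‖ N(am̃ + b, a²σ̃² + ε)) ≤ D_KL(N(m, σ²) ‖ N(m̃, σ̃²)). -/

import Mathlib

open MeasureTheory ProbabilityTheory
open scoped ENNReal NNReal Classical

noncomputable section

/-- The Kullback-Leibler divergence `D_KL(ν‖μ) = E^ν[log (dν/dμ)]` if `ν ≪ μ` (with value `∞`
if `ν ≪ μ` fails, or if the log-likelihood ratio is not integrable). -/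
def KLDiv {α : Type*} [MeasurableSpace α] (ν μ : Measure α) : ℝ≥0∞ :=
  if ν ≪ μ ∧ Integrable (llr ν μ) ν then ENNReal.ofReal (∫ x, llr ν μ x ∂ν) else ⊤

open Real Set

namespace Stmt14Aux

lemma rpow_two_eq (x : ℝ) : x ^ (2:ℝ) = x ^ (2:ℕ) := by
  rw [← Real.rpow_natCast x 2]; norm_num

lemma integrable_sq_mul_exp {c : ℝ} (hc : 0 < c) :
    Integrable fun x : ℝ => x ^ 2 * Real.exp (-c * x ^ 2) := by
  have h := integrable_rpow_mul_exp_neg_mul_sq hc (show (-1:ℝ) < 2 by norm_num)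
  simp_rw [rpow_two_eq] at h
  exact h

lemma integral_sq_mul_exp {c : ℝ} (hc : 0 < c) :
    ∫ x : ℝ, x ^ 2 * Real.exp (-c * x ^ 2) = Real.sqrt (π / c) / (2 * c) := by
  have heven : ∀ x : ℝ, |x| ^ 2 * Real.exp (-c * |x| ^ 2) = x ^ 2 * Real.exp (-c * x ^ 2) := by
    intro x; rw [sq_abs]
  have h := integral_comp_abs (f := fun x => x ^ 2 * Real.exp (-c * x ^ 2))
  simp only [heven] at h
  rw [h]
  have h2 : ∫ x in Ioi (0:ℝ), x ^ 2 * Real.exp (-c * x ^ 2)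
      = c ^ (-(((2:ℝ) + 1)) / 2) * (1 / 2) * Real.Gamma (((2:ℝ) + 1) / 2) := by
    have h3 := integral_rpow_mul_exp_neg_mul_rpow (p := 2) (q := 2) (b := c)
      (by norm_num) (by norm_num) hc
    simp_rw [rpow_two_eq] at h3
    exact h3
  rw [h2]
  have hG : Real.Gamma (((2:ℝ) + 1) / 2) = Real.sqrt π / 2 := by
    have h4 : ((2:ℝ) + 1) / 2 = 1/2 + 1 := by norm_num
    rw [h4, Real.Gamma_add_one (by norm_num), Real.Gamma_one_half_eq]
    ring
  rw [hG]
  have hrc : c ^ (-(((2:ℝ) + 1)) / 2) = 1 / (c * Real.sqrt c) := by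
    rw [show (-(((2:ℝ)+1))/2) = -(1 + 1/2) by norm_num, Real.rpow_neg hc.le,
      Real.rpow_add hc, Real.rpow_one, ← Real.sqrt_eq_rpow]
    field_simp
  rw [hrc, Real.sqrt_div pi_pos.le]
  have h1 : Real.sqrt c ≠ 0 := (Real.sqrt_pos.mpr hc).ne'
  field_simp

lemma integral_mul_exp_odd {c : ℝ} : ∫ x : ℝ, x * Real.exp (-c * x ^ 2) = 0 := by
  have h := (Measure.measurePreserving_neg (volume : Measure ℝ)).integral_comp
    (Homeomorph.neg ℝ).measurableEmbedding (fun x : ℝ => x * Real.exp (-c * x ^ 2))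
  simp only [neg_sq, neg_mul, integral_neg, neg_mul] at h
  simp only [neg_mul] at h ⊢
  linarith

lemma gaussianPDF_eq_coe (mm : ℝ) (v : ℝ≥0) :
    gaussianPDF mm v = fun x => ((gaussianPDFReal mm v x).toNNReal : ℝ≥0∞) := rfl

lemma integral_gaussianReal_eq (mm : ℝ) (v : ℝ≥0) (hv : v ≠ 0) (h : ℝ → ℝ) :
    ∫ x, h x ∂(gaussianReal mm v) = ∫ x, gaussianPDFReal mm v x * h x := by
  rw [gaussianReal_of_var_ne_zero _ hv, gaussianPDF_eq_coe,
    integral_withDensity_eq_integral_smul ((measurable_gaussianPDFReal mm v).real_toNNReal)]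
  congr 1; ext x
  rw [NNReal.smul_def, smul_eq_mul, Real.coe_toNNReal _ (gaussianPDFReal_nonneg mm v x)]

lemma integrable_gaussianReal_iff (mm : ℝ) (v : ℝ≥0) (hv : v ≠ 0) (h : ℝ → ℝ) :
    Integrable h (gaussianReal mm v) ↔ Integrable (fun x => gaussianPDFReal mm v x * h x) := by
  rw [gaussianReal_of_var_ne_zero _ hv, gaussianPDF_eq_coe,
    integrable_withDensity_iff_integrable_smul ((measurable_gaussianPDFReal mm v).real_toNNReal)]
  have heq : (fun x => (gaussianPDFReal mm v x).toNNReal • h x)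
      = fun x => gaussianPDFReal mm v x * h x := by
    ext x
    rw [NNReal.smul_def, smul_eq_mul, Real.coe_toNNReal _ (gaussianPDFReal_nonneg mm v x)]
  rw [heq]

lemma pdf_mul_sq_eq (mm c : ℝ) (v : ℝ≥0) :
    (fun x => gaussianPDFReal mm v x * (x - c) ^ 2)
      = fun x => (fun y => (Real.sqrt (2 * π * v))⁻¹ *
          ((y + (mm - c)) ^ 2 * Real.exp (-(2 * (v:ℝ))⁻¹ * y ^ 2))) (x - mm) := by
  ext x
  simp only [gaussianPDFReal]
  rw [show x - mm + (mm - c) = x - c by ring, show -(2 * (v:ℝ))⁻¹ * (x - mm) ^ 2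
    = -(x - mm)^2 / (2 * (v:ℝ)) by ring]
  ring

lemma integrable_shift_sq {b d : ℝ} (hb : 0 < b) :
    Integrable (fun y : ℝ => (y + d) ^ 2 * Real.exp (-b * y ^ 2)) := by
  have h1 := integrable_sq_mul_exp hb
  have h2 := integrable_mul_exp_neg_mul_sq hb
  have h3 := integrable_exp_neg_mul_sq hb
  have h : (fun y : ℝ => (y + d) ^ 2 * Real.exp (-b * y ^ 2))
      = fun y : ℝ => y ^ 2 * Real.exp (-b * y ^ 2) + (2 * d) * (y * Real.exp (-b * y ^ 2))
          + d ^ 2 * Real.exp (-b * y ^ 2) := by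
    ext y; ring
  rw [h]
  exact (h1.add (h2.const_mul _)).add (h3.const_mul _)

lemma integrable_sq_gaussianReal (mm c : ℝ) (v : ℝ≥0) (hv : v ≠ 0) :
    Integrable (fun x => (x - c) ^ 2) (gaussianReal mm v) := by
  rw [integrable_gaussianReal_iff mm v hv, pdf_mul_sq_eq mm c v]
  have hvpos : 0 < (v:ℝ) := NNReal.coe_pos.mpr (pos_iff_ne_zero.mpr hv)
  have hb : 0 < (2 * (v:ℝ))⁻¹ := by positivity
  exact (((integrable_shift_sq hb).const_mul _).comp_sub_right mm)

lemma integral_sub_sq_gaussianReal (mm c : ℝ) (v : ℝ≥0) (hv : v ≠ 0) :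
    ∫ x, (x - c) ^ 2 ∂(gaussianReal mm v) = (v:ℝ) + (mm - c) ^ 2 := by
  have hvpos : 0 < (v:ℝ) := NNReal.coe_pos.mpr (pos_iff_ne_zero.mpr hv)
  have hb : 0 < (2 * (v:ℝ))⁻¹ := by positivity
  set b : ℝ := (2 * (v:ℝ))⁻¹ with hbdef
  set d : ℝ := mm - c with hddef
  rw [integral_gaussianReal_eq mm v hv]
  rw [show (fun x => gaussianPDFReal mm v x * (x - c) ^ 2)
      = fun x => (fun y => (Real.sqrt (2 * π * v))⁻¹ *
          ((y + d) ^ 2 * Real.exp (-b * y ^ 2))) (x - mm) from pdf_mul_sq_eq mm c v]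
  rw [integral_sub_right_eq_self (μ := volume)
    (fun y => (Real.sqrt (2 * π * v))⁻¹ * ((y + d) ^ 2 * Real.exp (-b * y ^ 2))) mm]
  rw [integral_const_mul]
  have hexpand : (fun y : ℝ => (y + d) ^ 2 * Real.exp (-b * y ^ 2))
      = fun y : ℝ => (y ^ 2 * Real.exp (-b * y ^ 2) + (2 * d) * (y * Real.exp (-b * y ^ 2)))
          + d ^ 2 * Real.exp (-b * y ^ 2) := by
    ext y; ring
  rw [hexpand]
  have h1 : Integrable (fun y : ℝ => y ^ 2 * Real.exp (-b * y ^ 2)) := integrable_sq_mul_exp hb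
  have h2 : Integrable (fun y : ℝ => 2 * d * (y * Real.exp (-b * y ^ 2))) :=
    (integrable_mul_exp_neg_mul_sq hb).const_mul _
  have h3 : Integrable (fun y : ℝ => d ^ 2 * Real.exp (-b * y ^ 2)) :=
    (integrable_exp_neg_mul_sq hb).const_mul _
  have h12 : Integrable (fun y : ℝ => y ^ 2 * Real.exp (-b * y ^ 2)
      + 2 * d * (y * Real.exp (-b * y ^ 2))) := h1.add h2
  rw [integral_add h12 h3, integral_add h1 h2,
    integral_const_mul, integral_const_mul, integral_sq_mul_exp hb, integral_mul_exp_odd,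
    integral_gaussian]
  have hπb : π / b = 2 * π * (v:ℝ) := by
    rw [hbdef]; field_simp
  rw [hπb]
  have hs : 0 < Real.sqrt (2 * π * (v:ℝ)) := Real.sqrt_pos.mpr (by positivity)
  have hb' : b = (2 * (v:ℝ))⁻¹ := hbdef
  rw [hb']
  field_simp
  ring

def Lfun (m m' : ℝ) (v w : ℝ≥0) (x : ℝ) : ℝ :=
  (Real.log (Real.sqrt (2 * π * w)) - Real.log (Real.sqrt (2 * π * v)))
    + ((x - m') ^ 2 * (2 * (w:ℝ))⁻¹ - (x - m) ^ 2 * (2 * (v:ℝ))⁻¹)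

lemma llr_gaussian_ae (m m' : ℝ) (v w : ℝ≥0) (hv : v ≠ 0) (hw : w ≠ 0) :
    llr (gaussianReal m v) (gaussianReal m' w) =ᵐ[gaussianReal m v] Lfun m m' v w := by
  have hνμ : gaussianReal m v ≪ gaussianReal m' w :=
    (gaussianReal_absolutelyContinuous m hv).trans (gaussianReal_absolutelyContinuous' m' hw)
  have hνvol : gaussianReal m v ≪ (volume : Measure ℝ) := gaussianReal_absolutelyContinuous m hv
  have h1 : (gaussianReal m v).rnDeriv (gaussianReal m' w) * (gaussianReal m' w).rnDeriv volume
      =ᵐ[volume] (gaussianReal m v).rnDeriv volume := Measure.rnDeriv_mul_rnDeriv hνμ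
  have h2 := rnDeriv_gaussianReal m' w
  have h3 := rnDeriv_gaussianReal m v
  have h4 : ∀ᵐ x ∂(gaussianReal m v),
      (gaussianReal m v).rnDeriv (gaussianReal m' w) x ≠ ⊤ :=
    hνμ.ae_le (Measure.rnDeriv_ne_top _ _)
  have hvpos : 0 < ((v:ℝ)) := NNReal.coe_pos.mpr (pos_iff_ne_zero.mpr hv)
  have hwpos : 0 < ((w:ℝ)) := NNReal.coe_pos.mpr (pos_iff_ne_zero.mpr hw)
  filter_upwards [hνvol.ae_le h1, hνvol.ae_le h2, hνvol.ae_le h3, h4] with x hx1 hx2 hx3 hxt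
  set pv := gaussianPDFReal m v x with hpv
  set pw := gaussianPDFReal m' w x with hpw
  have hpvpos : 0 < pv := gaussianPDFReal_pos m v x hv
  have hpwpos : 0 < pw := gaussianPDFReal_pos m' w x hw
  have hx1' : ((gaussianReal m v).rnDeriv (gaussianReal m' w) x) * ENNReal.ofReal pw
      = ENNReal.ofReal pv := by
    have h5 := hx1
    simp only [Pi.mul_apply] at h5
    rw [hx2, hx3] at h5
    exact h5
  have htor : ((gaussianReal m v).rnDeriv (gaussianReal m' w) x).toReal * pw = pv := by
    have h6 := congrArg ENNReal.toReal hx1'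
    rwa [ENNReal.toReal_mul, ENNReal.toReal_ofReal hpwpos.le, ENNReal.toReal_ofReal hpvpos.le]
      at h6
  have hval : ((gaussianReal m v).rnDeriv (gaussianReal m' w) x).toReal = pv / pw := by
    field_simp [← htor]
    exact htor
  rw [llr, hval]
  rw [Real.log_div hpvpos.ne' hpwpos.ne']
  rw [hpv, hpw, gaussianPDFReal, gaussianPDFReal]
  have hsv : (0:ℝ) < Real.sqrt (2 * π * v) := Real.sqrt_pos.mpr (by positivity)
  have hsw : (0:ℝ) < Real.sqrt (2 * π * w) := Real.sqrt_pos.mpr (by positivity)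
  rw [Real.log_mul (inv_ne_zero hsv.ne') (Real.exp_ne_zero _),
    Real.log_mul (inv_ne_zero hsw.ne') (Real.exp_ne_zero _),
    Real.log_inv, Real.log_inv, Real.log_exp, Real.log_exp]
  unfold Lfun
  field_simp
  ring

lemma integrable_Lfun (m m' : ℝ) (v w : ℝ≥0) (hv : v ≠ 0) :
    Integrable (Lfun m m' v w) (gaussianReal m v) := by
  unfold Lfun
  exact (integrable_const _).add
    (((integrable_sq_gaussianReal m m' v hv).mul_const _).sub
      ((integrable_sq_gaussianReal m m v hv).mul_const _))

lemma integral_Lfun (m m' : ℝ) (v w : ℝ≥0) (hv : v ≠ 0) :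
    ∫ x, Lfun m m' v w x ∂(gaussianReal m v)
      = (Real.log (Real.sqrt (2 * π * w)) - Real.log (Real.sqrt (2 * π * v)))
        + (((v:ℝ) + (m - m') ^ 2) * (2 * (w:ℝ))⁻¹ - 2⁻¹) := by
  have hvpos : 0 < ((v:ℝ)) := NNReal.coe_pos.mpr (pos_iff_ne_zero.mpr hv)
  unfold Lfun
  have ha : Integrable (fun x : ℝ => (x - m') ^ 2 * (2 * (w:ℝ))⁻¹) (gaussianReal m v) :=
    (integrable_sq_gaussianReal m m' v hv).mul_const _
  have hb : Integrable (fun x : ℝ => (x - m) ^ 2 * (2 * (v:ℝ))⁻¹) (gaussianReal m v) :=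
    (integrable_sq_gaussianReal m m v hv).mul_const _
  have hab : Integrable (fun x : ℝ => (x - m') ^ 2 * (2 * (w:ℝ))⁻¹
      - (x - m) ^ 2 * (2 * (v:ℝ))⁻¹) (gaussianReal m v) := ha.sub hb
  rw [integral_add (integrable_const _) hab,
    integral_sub ha hb,
    integral_mul_const, integral_mul_const, integral_const,
    integral_sub_sq_gaussianReal m m' v hv, integral_sub_sq_gaussianReal m m v hv]
  simp only [measure_univ, probReal_univ, ENNReal.toReal_one, smul_eq_mul, one_mul, sub_self]
  have h7 : ((v:ℝ) + 0 ^ 2) * (2 * (v:ℝ))⁻¹ = 2⁻¹ := by field_simp; ring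
  rw [h7]

lemma KLDiv_gaussian (m m' : ℝ) (v w : ℝ≥0) (hv : v ≠ 0) (hw : w ≠ 0) :
    KLDiv (gaussianReal m v) (gaussianReal m' w)
      = ENNReal.ofReal ((Real.log (Real.sqrt (2 * π * w)) - Real.log (Real.sqrt (2 * π * v)))
        + (((v:ℝ) + (m - m') ^ 2) * (2 * (w:ℝ))⁻¹ - 2⁻¹)) := by
  have hνμ : gaussianReal m v ≪ gaussianReal m' w :=
    (gaussianReal_absolutelyContinuous m hv).trans (gaussianReal_absolutelyContinuous' m' hw)
  have hint : Integrable (llr (gaussianReal m v) (gaussianReal m' w)) (gaussianReal m v) :=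
    (integrable_Lfun m m' v w hv).congr (llr_gaussian_ae m m' v w hv hw).symm
  rw [KLDiv, if_pos ⟨hνμ, hint⟩,
    integral_congr_ae (llr_gaussian_ae m m' v w hv hw), integral_Lfun m m' v w hv]

lemma mono1 {u v : ℝ} (h1 : 1 ≤ u) (huv : u ≤ v) : u - Real.log u ≤ v - Real.log v := by
  have hu : 0 < u := lt_of_lt_of_le one_pos h1
  have hv : 0 < v := lt_of_lt_of_le hu huv
  have h := Real.log_le_sub_one_of_pos (show 0 < v / u by positivity)
  rw [Real.log_div hv.ne' hu.ne'] at h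
  have h2 : v / u - 1 ≤ v - u := by
    rw [div_sub_one hu.ne', div_le_iff₀ hu]
    nlinarith
  linarith

lemma mono2 {u v : ℝ} (hu : 0 < u) (huv : u ≤ v) (hv1 : v ≤ 1) :
    v - Real.log v ≤ u - Real.log u := by
  have hv : 0 < v := lt_of_lt_of_le hu huv
  have h := Real.log_le_sub_one_of_pos (show 0 < u / v by positivity)
  rw [Real.log_div hu.ne' hv.ne'] at h
  have h2 : u / v - 1 ≤ u - v := by
    rw [div_sub_one hv.ne', div_le_iff₀ hv]
    nlinarith
  linarith

lemma key_ineq (σ2 σt2 ε d A : ℝ) (hσ2 : 0 < σ2) (hσt2 : 0 < σt2) (hε : 0 < ε) (hA : 0 ≤ A) :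
    (Real.log (A*σt2+ε) - Real.log (A*σ2+ε))/2 + (A*σ2+ε + A*d^2)*(2*(A*σt2+ε))⁻¹
      ≤ (Real.log σt2 - Real.log σ2)/2 + (σ2 + d^2)*(2*σt2)⁻¹ := by
  set v1 : ℝ := A*σ2+ε with hv1
  set w1 : ℝ := A*σt2+ε with hw1
  have hv1p : 0 < v1 := by positivity
  have hw1p : 0 < w1 := by positivity
  have claim2 : A*d^2/w1 ≤ d^2/σt2 := by
    rw [div_le_div_iff₀ hw1p hσt2]
    nlinarith [sq_nonneg d]
  have claim1 : Real.log w1 - Real.log v1 + v1/w1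
      ≤ Real.log σt2 - Real.log σ2 + σ2/σt2 := by
    have hlt' : Real.log (v1/w1) = Real.log v1 - Real.log w1 := Real.log_div hv1p.ne' hw1p.ne'
    have hlt : Real.log (σ2/σt2) = Real.log σ2 - Real.log σt2 := Real.log_div hσ2.ne' hσt2.ne'
    rcases le_or_gt σt2 σ2 with hcase | hcase
    · have h1 : (1:ℝ) ≤ v1/w1 := (one_le_div hw1p).mpr (by nlinarith)
      have h2 : v1/w1 ≤ σ2/σt2 := by
        rw [div_le_div_iff₀ hw1p hσt2]
        nlinarith
      have h8 := mono1 h1 h2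
      rw [hlt', hlt] at h8
      linarith
    · have h0 : 0 < σ2/σt2 := by positivity
      have h1 : σ2/σt2 ≤ v1/w1 := by
        rw [div_le_div_iff₀ hσt2 hw1p]
        nlinarith
      have h2 : v1/w1 ≤ 1 := by
        rw [div_le_one hw1p]
        nlinarith
      have h8 := mono2 h0 h1 h2
      rw [hlt', hlt] at h8
      linarith
  have e1 : (v1 + A*d^2)*(2*w1)⁻¹ = (v1/w1)/2 + (A*d^2/w1)/2 := by
    field_simp
  have e2 : (σ2 + d^2)*(2*σt2)⁻¹ = (σ2/σt2)/2 + (d^2/σt2)/2 := by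
    field_simp
  rw [e1, e2]
  linarith

lemma log_sqrt_diff {v w : ℝ} (hv : 0 < v) (hw : 0 < w) :
    Real.log (Real.sqrt (2 * π * w)) - Real.log (Real.sqrt (2 * π * v))
      = (Real.log w - Real.log v) / 2 := by
  rw [Real.log_sqrt (by positivity), Real.log_sqrt (by positivity),
    Real.log_mul (by positivity) hw.ne', Real.log_mul (by positivity) hv.ne']
  ring

end Stmt14Aux

open Stmt14Aux in
/-- For any means `m, m̃`, variances `σ², σ̃² > 0`, `a, b ∈ ℝ` and `ε > 0`, the one-dimensional
Gaussian distributions satisfy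
`D_KL(N(am + b, a²σ² + ε) ‖ N(am̃ + b, a²σ̃² + ε)) ≤ D_KL(N(m, σ²) ‖ N(m̃, σ̃²))`. -/
theorem stmt_14 (m mt σ2 σt2 : ℝ) (hσ2 : 0 < σ2) (hσt2 : 0 < σt2) (a b ε : ℝ) (hε : 0 < ε) :
    KLDiv (gaussianReal (a * m + b) (a ^ 2 * σ2 + ε).toNNReal)
        (gaussianReal (a * mt + b) (a ^ 2 * σt2 + ε).toNNReal)
      ≤ KLDiv (gaussianReal m σ2.toNNReal) (gaussianReal mt σt2.toNNReal) := by
  have hv1 : (0:ℝ) < a ^ 2 * σ2 + ε := by positivity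
  have hw1 : (0:ℝ) < a ^ 2 * σt2 + ε := by positivity
  have hv1' : (a ^ 2 * σ2 + ε).toNNReal ≠ 0 := ne_of_gt (Real.toNNReal_pos.mpr hv1)
  have hw1' : (a ^ 2 * σt2 + ε).toNNReal ≠ 0 := ne_of_gt (Real.toNNReal_pos.mpr hw1)
  have hv' : σ2.toNNReal ≠ 0 := ne_of_gt (Real.toNNReal_pos.mpr hσ2)
  have hw' : σt2.toNNReal ≠ 0 := ne_of_gt (Real.toNNReal_pos.mpr hσt2)
  rw [KLDiv_gaussian _ _ _ _ hv1' hw1', KLDiv_gaussian _ _ _ _ hv' hw']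
  have c1 : ((a ^ 2 * σ2 + ε).toNNReal : ℝ) = a ^ 2 * σ2 + ε := Real.coe_toNNReal _ hv1.le
  have c2 : ((a ^ 2 * σt2 + ε).toNNReal : ℝ) = a ^ 2 * σt2 + ε := Real.coe_toNNReal _ hw1.le
  have c3 : ((σ2.toNNReal : ℝ≥0) : ℝ) = σ2 := Real.coe_toNNReal _ hσ2.le
  have c4 : ((σt2.toNNReal : ℝ≥0) : ℝ) = σt2 := Real.coe_toNNReal _ hσt2.le
  rw [c1, c2, c3, c4]
  apply ENNReal.ofReal_le_ofReal
  rw [log_sqrt_diff hv1 hw1, log_sqrt_diff hσ2 hσt2]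
  have hd : (a * m + b - (a * mt + b)) ^ 2 = a ^ 2 * (m - mt) ^ 2 := by ring
  rw [hd]
  have := key_ineq σ2 σt2 ε (m - mt) (a ^ 2) hσ2 hσt2 hε (sq_nonneg a)
  linarith

end
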